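/- arXiv:2509.02787 — 2 statements merged into one kernel-verified Lean document; each statement's English description precedes it below -/
import Mathlib

section
/- Let K be a closed cone with nonempty interior in a finite dimensional real normed space. If 𝒜 is a bounded, primitive family of continuous, order-preserving, homogeneous maps on K with generalized spectral radius r(𝒜) = 1, then the semigroup 𝒜⁺ is bounded. -/
open Filter Topology Set

noncomputable section

/-- A wedge in a real normed space: a convex set closed under positive scalar multiplication. -/
def IsWedge {X : Type*} [NormedAddCommGroup X] [NormedSpace ℝ X] (W : Set X) : Prop :=
  Convex ℝ W ∧ ∀ c : ℝ, 0 < c → ∀ x ∈ W, c • x ∈ W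

/-- A closed cone: closed, convex, closed under positive scalar multiplication, K ∩ (−K) = {0}. -/
def IsClosedCone {X : Type*} [NormedAddCommGroup X] [NormedSpace ℝ X] (K : Set X) : Prop :=
  IsClosed K ∧ Convex ℝ K ∧ (∀ c : ℝ, 0 < c → ∀ x ∈ K, c • x ∈ K) ∧ K ∩ (-K) = {0}

/-- A polyhedral cone: intersection of finitely many closed halfspaces through the origin. -/
def IsPolyhedralCone {X : Type*} [NormedAddCommGroup X] [NormedSpace ℝ X] (K : Set X) : Prop :=
  ∃ (k : ℕ) (φ : Fin k → (X →ₗ[ℝ] ℝ)), K = {x | ∀ i, 0 ≤ φ i x}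

/-- `f` maps `W` into itself and is positively homogeneous on `W`. -/
def HomogOn {X : Type*} [NormedAddCommGroup X] [NormedSpace ℝ X] (f : X → X) (W : Set X) : Prop :=
  Set.MapsTo f W W ∧ ∀ c : ℝ, 0 < c → ∀ x ∈ W, f (c • x) = c • f x

/-- `f` is order-preserving with respect to the order induced by the cone `K`. -/
def OrderPresOn {X : Type*} [NormedAddCommGroup X] [NormedSpace ℝ X] (f : X → X) (K : Set X) : Prop :=
  ∀ x ∈ K, ∀ y ∈ K, y - x ∈ K → f y - f x ∈ K

/-- `f` is subadditive on `K`: f(x+y) ≤ f(x)+f(y) in the cone order. -/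
def SubaddOn {X : Type*} [NormedAddCommGroup X] [NormedSpace ℝ X] (f : X → X) (K : Set X) : Prop :=
  ∀ x ∈ K, ∀ y ∈ K, (f x + f y) - f (x + y) ∈ K

/-- The norm of a homogeneous map on `W`: sup of ‖f x‖ over unit vectors of `W`. -/
def opNormW {X : Type*} [NormedAddCommGroup X] (f : X → X) (W : Set X) : ℝ :=
  sSup ((fun x => ‖f x‖) '' {x ∈ W | ‖x‖ = 1})

/-- A bounded homogeneous map on `W`. -/
def BoundedMapOn {X : Type*} [NormedAddCommGroup X] (f : X → X) (W : Set X) : Prop :=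
  ∃ C : ℝ, ∀ x ∈ W, ‖f x‖ ≤ C * ‖x‖

/-- A bounded family of homogeneous maps on `W`. -/
def BoundedFamOn {X : Type*} [NormedAddCommGroup X] (A : Set (X → X)) (W : Set X) : Prop :=
  ∃ C : ℝ, ∀ f ∈ A, ∀ x ∈ W, ‖f x‖ ≤ C * ‖x‖

/-- `famPow A m` = 𝒜^m, the set of m-fold compositions of maps from `A` (with 𝒜^0 = {id}). -/
def famPow {X : Type*} (A : Set (X → X)) : ℕ → Set (X → X)
  | 0 => {id}
  | m + 1 => {h | ∃ f ∈ A, ∃ g ∈ famPow A m, h = f ∘ g}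

/-- The composition of two families of maps. -/
def compFam {X : Type*} (A B : Set (X → X)) : Set (X → X) :=
  {h | ∃ f ∈ A, ∃ g ∈ B, h = f ∘ g}

/-- The Bonsall cone spectral radius r(f) = inf_{n>0} ‖f^n‖^{1/n}. -/
def coneSpecRad {X : Type*} [NormedAddCommGroup X] (f : X → X) (W : Set X) : ℝ :=
  ⨅ n : ℕ+, (opNormW (f^[(n : ℕ)]) W) ^ (((n : ℕ) : ℝ)⁻¹)

/-- sup_{f ∈ 𝒜^m} ‖f‖^{1/m}. -/
def jointTerm {X : Type*} [NormedAddCommGroup X] (A : Set (X → X)) (W : Set X) (m : ℕ) : ℝ :=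
  sSup ((fun f => (opNormW f W) ^ ((m : ℝ)⁻¹)) '' famPow A m)

/-- sup_{f ∈ 𝒜^m} r(f)^{1/m}. -/
def genTerm {X : Type*} [NormedAddCommGroup X] (A : Set (X → X)) (W : Set X) (m : ℕ) : ℝ :=
  sSup ((fun f => (coneSpecRad f W) ^ ((m : ℝ)⁻¹)) '' famPow A m)

/-- The joint spectral radius r̂(𝒜) = inf_{m>0} sup_{f ∈ 𝒜^m} ‖f‖^{1/m}. -/
def jointRad {X : Type*} [NormedAddCommGroup X] (A : Set (X → X)) (W : Set X) : ℝ :=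
  ⨅ m : ℕ+, jointTerm A W (m : ℕ)

/-- The generalized spectral radius r(𝒜) = sup_{m>0} sup_{f ∈ 𝒜^m} r(f)^{1/m}. -/
def genRad {X : Type*} [NormedAddCommGroup X] (A : Set (X → X)) (W : Set X) : ℝ :=
  ⨆ m : ℕ+, genTerm A W (m : ℕ)

/-- β_m = inf_{f ∈ 𝒜^m} ‖f‖. -/
def subBeta {X : Type*} [NormedAddCommGroup X] (A : Set (X → X)) (W : Set X) (m : ℕ) : ℝ :=
  sInf ((fun f => opNormW f W) '' famPow A m)

/-- γ_m = inf_{f ∈ 𝒜^m} r(f). -/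
def subGamma {X : Type*} [NormedAddCommGroup X] (A : Set (X → X)) (W : Set X) (m : ℕ) : ℝ :=
  sInf ((fun f => coneSpecRad f W) '' famPow A m)

/-- F_m^d = f_m ∘ ⋯ ∘ f_1 for a sequence d of maps. -/
def seqComp {X : Type*} (d : ℕ → X → X) : ℕ → X → X
  | 0 => id
  | m + 1 => d m ∘ seqComp d m

/-- The standard cone ℝⁿ_{≥0}. -/
def stdCone (n : ℕ) : Set (Fin n → ℝ) := {x | ∀ i, 0 ≤ x i}

/-- The closed face F_J of the standard cone. -/
def stdFace {n : ℕ} (J : Set (Fin n)) : Set (Fin n → ℝ) :=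
  {x | (∀ i, 0 ≤ x i) ∧ ∀ i ∉ J, x i = 0}

/-- A family of maps on ℝⁿ_{≥0} is irreducible if no non-trivial closed face is invariant
under every member of the family. -/
def IrreducibleFam {n : ℕ} (A : Set ((Fin n → ℝ) → Fin n → ℝ)) : Prop :=
  ¬ ∃ J : Set (Fin n), J.Nonempty ∧ J ≠ Set.univ ∧ ∀ f ∈ A, Set.MapsTo f (stdFace J) (stdFace J)

section Aux

variable {X : Type*} [NormedAddCommGroup X] [NormedSpace ℝ X] {K : Set X}

lemma coneZero (hK : IsClosedCone K) : (0:X) ∈ K := by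
  have h := hK.2.2.2
  have : (0:X) ∈ K ∩ (-K) := by rw [h]; exact rfl
  exact this.1

lemma coneAdd (hK : IsClosedCone K) {x y : X} (hx : x ∈ K) (hy : y ∈ K) : x + y ∈ K := by
  have h := hK.2.1 hx hy (by norm_num : (0:ℝ) ≤ 1/2) (by norm_num : (0:ℝ) ≤ 1/2) (by norm_num)
  have h2 := hK.2.2.1 2 (by norm_num) _ h
  have : (2:ℝ) • ((1/2 : ℝ) • x + (1/2 : ℝ) • y) = x + y := by
    rw [smul_add, smul_smul, smul_smul]; norm_num
  rwa [this] at h2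

lemma coneSmul (hK : IsClosedCone K) {c : ℝ} (hc : 0 ≤ c) {x : X} (hx : x ∈ K) : c • x ∈ K := by
  rcases hc.lt_or_eq with h | h
  · exact hK.2.2.1 c h x hx
  · rw [← h, zero_smul]; exact coneZero hK

lemma coneEq (hK : IsClosedCone K) {x : X} (hx : x ∈ K) (hx' : -x ∈ K) : x = 0 := by
  have : x ∈ K ∩ (-K) := ⟨hx, by simpa using hx'⟩
  rw [hK.2.2.2] at this; exact this

lemma normality [FiniteDimensional ℝ X] (hK : IsClosedCone K) :
    ∃ N : ℝ, 1 ≤ N ∧ ∀ y ∈ K, ∀ z ∈ K, z - y ∈ K → ‖y‖ ≤ N * ‖z‖ := by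
  classical
  set T : Set (X × X) := {p | p.1 ∈ K ∧ p.2 ∈ K ∧ p.2 - p.1 ∈ K ∧ ‖p.1‖ = 1 ∧ ‖p.2‖ ≤ 1} with hT
  rcases eq_empty_or_nonempty T with hTe | hTne
  · refine ⟨1, le_refl _, fun y hy z hz hzy => ?_⟩
    by_contra hlt
    push_neg at hlt
    rw [one_mul] at hlt
    have hy0 : y ≠ 0 := by
      intro h; rw [h, norm_zero] at hlt; exact absurd (norm_nonneg z) (not_le.mpr hlt)
    have hny : 0 < ‖y‖ := norm_pos_iff.mpr hy0
    have : (‖y‖⁻¹ • y, ‖y‖⁻¹ • z) ∈ T := by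
      refine ⟨coneSmul hK (by positivity) hy, coneSmul hK (by positivity) hz, ?_, ?_, ?_⟩
      · rw [← smul_sub]; exact coneSmul hK (by positivity) hzy
      · rw [norm_smul, norm_inv, norm_norm]; field_simp
      · rw [norm_smul, norm_inv, norm_norm]
        rw [inv_mul_le_iff₀ hny, mul_one]; exact hlt.le
    rw [hTe] at this; exact this
  · have hTclosed : IsClosed T := by
      have : T = ({p : X×X | p.1 ∈ K} ∩ {p | p.2 ∈ K} ∩ {p | p.2 - p.1 ∈ K}
          ∩ {p | ‖p.1‖ = 1} ∩ {p | ‖p.2‖ ≤ 1}) := by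
        ext p; simp [hT, and_assoc]
      rw [this]
      exact ((((hK.1.preimage continuous_fst).inter (hK.1.preimage continuous_snd)).inter
        (hK.1.preimage (continuous_snd.sub continuous_fst))).inter
        (isClosed_eq continuous_fst.norm continuous_const)).inter
        (isClosed_le continuous_snd.norm continuous_const)
    have hTc : IsCompact T := by
      apply Metric.isCompact_of_isClosed_isBounded hTclosed
      apply Bornology.IsBounded.subset (Metric.isBounded_closedBall (x := (0 : X × X)) (r := 1))
      intro p hp
      rw [Metric.mem_closedBall, dist_zero_right, Prod.norm_def]
      exact max_le (le_of_eq hp.2.2.2.1) hp.2.2.2.2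
    obtain ⟨p, hpT, hpmin⟩ := hTc.exists_isMinOn hTne (continuous_snd.norm.continuousOn)
    have hp2 : p.2 ≠ 0 := by
      intro h
      have h1 : -p.1 ∈ K := by
        have := hpT.2.2.1
        rwa [h, zero_sub] at this
      have h2 := coneEq hK hpT.1 h1
      have h3 := hpT.2.2.2.1
      rw [h2, norm_zero] at h3
      exact one_ne_zero h3.symm
    set δ : ℝ := ‖p.2‖ with hδ
    have hδpos : 0 < δ := norm_pos_iff.mpr hp2
    refine ⟨max δ⁻¹ 1, le_max_right _ _, fun y hy z hz hzy => ?_⟩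
    by_cases hy0 : y = 0
    · rw [hy0, norm_zero]; positivity
    have hny : 0 < ‖y‖ := norm_pos_iff.mpr hy0
    by_cases hle : ‖y‖ ≤ ‖z‖
    · calc ‖y‖ ≤ ‖z‖ := hle
        _ = 1 * ‖z‖ := (one_mul _).symm
        _ ≤ max δ⁻¹ 1 * ‖z‖ := by
          apply mul_le_mul_of_nonneg_right (le_max_right _ _) (norm_nonneg _)
    · push_neg at hle
      have hmem : (‖y‖⁻¹ • y, ‖y‖⁻¹ • z) ∈ T := by
        refine ⟨coneSmul hK (by positivity) hy, coneSmul hK (by positivity) hz, ?_, ?_, ?_⟩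
        · rw [← smul_sub]; exact coneSmul hK (by positivity) hzy
        · rw [norm_smul, norm_inv, norm_norm]; field_simp
        · rw [norm_smul, norm_inv, norm_norm, inv_mul_le_iff₀ hny, mul_one]; exact hle.le
      have := hpmin hmem
      simp only [IsMinOn, IsMinFilter] at this
      have hz2 : δ ≤ ‖(‖y‖⁻¹ • z)‖ := this
      rw [norm_smul, norm_inv, norm_norm] at hz2
      have : δ * ‖y‖ ≤ ‖z‖ := by
        have := mul_le_mul_of_nonneg_left hz2 hny.le
        rw [mul_comm δ ‖y‖]
        calc ‖y‖ * δ ≤ ‖y‖ * (‖y‖⁻¹ * ‖z‖) := this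
          _ = ‖z‖ := by field_simp
      calc ‖y‖ = δ⁻¹ * (δ * ‖y‖) := by field_simp
        _ ≤ δ⁻¹ * ‖z‖ := by apply mul_le_mul_of_nonneg_left this (by positivity)
        _ ≤ max δ⁻¹ 1 * ‖z‖ := mul_le_mul_of_nonneg_right (le_max_left _ _) (norm_nonneg _)


variable {A : Set (X → X)}

lemma famPow_props (hK : IsClosedCone K)
    (hA : ∀ f ∈ A, ContinuousOn f K ∧ HomogOn f K ∧ OrderPresOn f K)
    {C₀ : ℝ} (hC₀ : 0 ≤ C₀) (hCb : ∀ f ∈ A, ∀ x ∈ K, ‖f x‖ ≤ C₀ * ‖x‖) :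
    ∀ m : ℕ, ∀ g ∈ famPow A m, Set.MapsTo g K K ∧
      (∀ c : ℝ, 0 < c → ∀ x ∈ K, g (c • x) = c • g x) ∧
      OrderPresOn g K ∧ ContinuousOn g K ∧ ∀ x ∈ K, ‖g x‖ ≤ C₀ ^ m * ‖x‖ := by
  intro m
  induction m with
  | zero =>
    intro g hg
    simp only [famPow, Set.mem_singleton_iff] at hg
    subst hg
    refine ⟨Set.mapsTo_id K, fun c hc x hx => rfl, fun x hx y hy h => h,
      continuousOn_id, fun x hx => ?_⟩
    simp
  | succ m ih =>
    rintro g ⟨f, hf, g', hg', rfl⟩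
    obtain ⟨hm, hh, ho, hc, hb⟩ := ih g' hg'
    obtain ⟨hfc, hfh, hfo⟩ := hA f hf
    refine ⟨hfh.1.comp hm, ?_, ?_, ?_, ?_⟩
    · intro c hc' x hx
      show f (g' (c • x)) = c • f (g' x)
      rw [hh c hc' x hx, hfh.2 c hc' _ (hm hx)]
    · intro x hx y hy hxy
      exact hfo _ (hm hx) _ (hm hy) (ho x hx y hy hxy)
    · exact hfc.comp hc hm
    · intro x hx
      calc ‖f (g' x)‖ ≤ C₀ * ‖g' x‖ := hCb f hf _ (hm hx)
        _ ≤ C₀ * (C₀ ^ m * ‖x‖) := mul_le_mul_of_nonneg_left (hb x hx) hC₀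
        _ = C₀ ^ (m + 1) * ‖x‖ := by ring

lemma famPow_comp {a b : ℕ} {f g : X → X} (hf : f ∈ famPow A a) (hg : g ∈ famPow A b) :
    f ∘ g ∈ famPow A (a + b) := by
  induction a generalizing f with
  | zero =>
    simp only [famPow, Set.mem_singleton_iff] at hf
    subst hf
    simpa using hg
  | succ a ih =>
    obtain ⟨f₁, hf₁, f₂, hf₂, rfl⟩ := hf
    have heq : a + 1 + b = (a + b) + 1 := by ring
    rw [heq]
    exact ⟨f₁, hf₁, f₂ ∘ g, ih hf₂, rfl⟩

lemma famPow_iterate {k : ℕ} {h : X → X} (hh : h ∈ famPow A k) (n : ℕ) :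
    h^[n] ∈ famPow A (n * k) := by
  induction n with
  | zero => simp [famPow]
  | succ n ih =>
    rw [Function.iterate_succ']
    have := famPow_comp hh ih
    have heq : k + n * k = (n + 1) * k := by ring
    rwa [heq] at this

lemma opNormW_nonneg (f : X → X) (W : Set X) : 0 ≤ opNormW f W :=
  Real.sSup_nonneg (by rintro v ⟨y, hy, rfl⟩; exact norm_nonneg _)

lemma opNormW_le {f : X → X} {W : Set X} {B : ℝ} (hB : 0 ≤ B)
    (h : ∀ x ∈ W, ‖x‖ = 1 → ‖f x‖ ≤ B) : opNormW f W ≤ B :=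
  Real.sSup_le (by rintro v ⟨y, ⟨hy1, hy2⟩, rfl⟩; exact h y hy1 hy2) hB

lemma le_opNormW {f : X → X} {W : Set X} {x : X} (hx : x ∈ W) (hx1 : ‖x‖ = 1)
    {B : ℝ} (hb : ∀ y ∈ W, ‖y‖ = 1 → ‖f y‖ ≤ B) : ‖f x‖ ≤ opNormW f W :=
  le_csSup ⟨B, by rintro v ⟨y, ⟨h1, h2⟩, rfl⟩; exact hb y h1 h2⟩ ⟨x, ⟨hx, hx1⟩, rfl⟩

lemma coneSpecRad_nonneg (f : X → X) (W : Set X) : 0 ≤ coneSpecRad f W :=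
  Real.iInf_nonneg fun n => Real.rpow_nonneg (opNormW_nonneg _ _) _

lemma coneSpecRad_le_opNormW (f : X → X) (W : Set X) : coneSpecRad f W ≤ opNormW f W := by
  have hbb : BddBelow (Set.range fun n : ℕ+ => (opNormW (f^[(n : ℕ)]) W) ^ (((n : ℕ) : ℝ)⁻¹)) :=
    ⟨0, by rintro v ⟨n, rfl⟩; exact Real.rpow_nonneg (opNormW_nonneg _ _) _⟩
  have h := ciInf_le hbb (1 : ℕ+)
  simpa [coneSpecRad] using h

lemma keyLemma (hK : IsClosedCone K)
    (hA : ∀ f ∈ A, ContinuousOn f K ∧ HomogOn f K ∧ OrderPresOn f K)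
    {C₀ : ℝ} (hC₀ : 1 ≤ C₀) (hCb : ∀ f ∈ A, ∀ x ∈ K, ‖f x‖ ≤ C₀ * ‖x‖)
    {N : ℝ} (hN1 : 1 ≤ N) (hNorm : ∀ y ∈ K, ∀ z ∈ K, z - y ∈ K → ‖y‖ ≤ N * ‖z‖)
    {u : X} (huK : u ∈ K) (hu0 : u ≠ 0)
    {k : ℕ} (hk : 0 < k) {h : X → X} (hh : h ∈ famPow A k)
    {c : ℝ} (hc : 1 < c) (hcu : h u - c • u ∈ K)
    (hr : genRad A K = 1) : False := by
  have hC₀0 : (0:ℝ) ≤ C₀ := zero_le_one.trans hC₀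
  have hN0 : (0:ℝ) < N := lt_of_lt_of_le one_pos hN1
  have P := famPow_props hK hA hC₀0 hCb
  have hcpos : (0:ℝ) < c := lt_trans one_pos hc
  have hiter : ∀ n : ℕ, h^[n] ∈ famPow A (n * k) := famPow_iterate hh
  have hmaps : ∀ n, h^[n] u ∈ K := fun n => (P _ _ (hiter n)).1 huK
  have hnu : (0:ℝ) < ‖u‖ := norm_pos_iff.mpr hu0
  have horder : ∀ n : ℕ, h^[n] u - c ^ n • u ∈ K := by
    intro n
    induction n with
    | zero => simpa using coneZero hK
    | succ n ih =>
      have h1 : h (h^[n] u) - h (c ^ n • u) ∈ K :=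
        (P k h hh).2.2.1 _ (coneSmul hK (by positivity) huK) _ (hmaps n) ih
      have h2 : h (c ^ n • u) = c ^ n • h u := (P k h hh).2.1 _ (by positivity) u huK
      have h3 : c ^ n • (h u - c • u) ∈ K := coneSmul hK (by positivity) hcu
      have h4 := coneAdd hK h1 h3
      rw [Function.iterate_succ_apply']
      convert h4 using 1
      rw [h2, smul_sub, smul_smul, ← pow_succ]
      abel
  have hnormlb : ∀ n : ℕ, c ^ n * ‖u‖ ≤ N * ‖h^[n] u‖ := by
    intro n
    have := hNorm _ (coneSmul hK (by positivity) huK) _ (hmaps n) (horder n)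
    rwa [norm_smul, Real.norm_eq_abs, abs_of_pos (by positivity)] at this
  have hopbound : ∀ (m : ℕ), ∀ f ∈ famPow A m, ∀ x ∈ K, ‖x‖ = 1 → ‖f x‖ ≤ C₀ ^ m := by
    intro m f hf x hx hx1
    have := (P m f hf).2.2.2.2 x hx
    rwa [hx1, mul_one] at this
  have hop : ∀ n : ℕ, c ^ n / N ≤ opNormW (h^[n]) K := by
    intro n
    set v := ‖u‖⁻¹ • u with hv
    have hvK : v ∈ K := coneSmul hK (by positivity) huK
    have hv1 : ‖v‖ = 1 := by rw [hv, norm_smul, norm_inv, norm_norm]; field_simp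
    have hhv : h^[n] v = ‖u‖⁻¹ • h^[n] u := (P _ _ (hiter n)).2.1 _ (by positivity) u huK
    have h5 : c ^ n / N ≤ ‖h^[n] v‖ := by
      rw [hhv, norm_smul, norm_inv, norm_norm, div_le_iff₀ hN0, ← mul_le_mul_iff_of_pos_right hnu]
      calc c ^ n * ‖u‖ ≤ N * ‖h^[n] u‖ := hnormlb n
        _ = ‖u‖⁻¹ * ‖h^[n] u‖ * N * ‖u‖ := by field_simp
    exact h5.trans (le_opNormW hvK hv1 (hopbound _ _ (hiter n)))
  -- choose j with N < c^j
  obtain ⟨j, hj⟩ := pow_unbounded_of_one_lt N hc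
  have hj0 : j ≠ 0 := by
    intro h0
    rw [h0, pow_zero] at hj
    exact absurd hN1 (not_le.mpr hj)
  set b : ℝ := c ^ j / N with hb
  have hb1 : 1 < b := (one_lt_div hN0).mpr hj
  have hb0 : (0:ℝ) < b := lt_trans one_pos hb1
  -- b ≤ coneSpecRad (h^[j]) K
  have hrad : b ≤ coneSpecRad (h^[j]) K := by
    apply le_ciInf
    intro n
    have hitermul : (h^[j])^[(n:ℕ)] = h^[j * (n:ℕ)] := (Function.iterate_mul h j (n:ℕ)).symm
    rw [hitermul]
    have hbn : b ^ (n:ℕ) ≤ opNormW (h^[j * (n:ℕ)]) K := by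
      have h1 : b ^ (n:ℕ) ≤ c ^ (j * (n:ℕ)) / N := by
        rw [hb, div_pow, ← pow_mul]
        have hNn : N ≤ N ^ (n:ℕ) := le_self_pow₀ hN1 n.pos.ne'
        have hnum : (0:ℝ) ≤ c ^ (j * (n:ℕ)) := by positivity
        exact div_le_div_of_nonneg_left hnum hN0 hNn
      exact h1.trans (hop _)
    calc b = (b ^ (n:ℕ)) ^ (((n:ℕ):ℝ)⁻¹) := (Real.pow_rpow_inv_natCast hb0.le n.pos.ne').symm
      _ ≤ (opNormW (h^[j * (n:ℕ)]) K) ^ (((n:ℕ):ℝ)⁻¹) :=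
        Real.rpow_le_rpow (by positivity) hbn (by positivity)
  -- genTerm bound
  have hjk : 0 < j * k := Nat.mul_pos (Nat.pos_of_ne_zero hj0) hk
  have hgenle : ∀ m : ℕ+, genTerm A K (m : ℕ) ≤ C₀ := by
    intro m
    apply Real.sSup_le _ (zero_le_one.trans hC₀)
    rintro v ⟨f, hf, rfl⟩
    have hfb : opNormW f K ≤ C₀ ^ (m:ℕ) := opNormW_le (by positivity) (hopbound _ _ hf)
    have h2 : (coneSpecRad f K) ^ (((m:ℕ):ℝ)⁻¹) ≤ (C₀ ^ (m:ℕ)) ^ (((m:ℕ):ℝ)⁻¹) :=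
      Real.rpow_le_rpow (coneSpecRad_nonneg _ _) ((coneSpecRad_le_opNormW f K).trans hfb)
        (by positivity)
    rwa [Real.pow_rpow_inv_natCast hC₀0 m.pos.ne'] at h2
  have hterm : b ^ (((j * k : ℕ):ℝ)⁻¹) ≤ genTerm A K (j * k) := by
    have hmem : (coneSpecRad (h^[j]) K) ^ (((j * k : ℕ):ℝ)⁻¹) ∈
        (fun f => (coneSpecRad f K) ^ (((j * k : ℕ):ℝ)⁻¹)) '' famPow A (j * k) :=
      ⟨h^[j], hiter j, rfl⟩
    have hbdd : BddAbove ((fun f => (coneSpecRad f K) ^ (((j * k : ℕ):ℝ)⁻¹)) '' famPow A (j * k)) := by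
      refine ⟨C₀, ?_⟩
      rintro v ⟨f, hf, rfl⟩
      have hfb : opNormW f K ≤ C₀ ^ (j * k) := opNormW_le (by positivity) (hopbound _ _ hf)
      have h2 : (coneSpecRad f K) ^ (((j * k : ℕ):ℝ)⁻¹) ≤ (C₀ ^ (j * k)) ^ (((j * k : ℕ):ℝ)⁻¹) :=
        Real.rpow_le_rpow (coneSpecRad_nonneg _ _) ((coneSpecRad_le_opNormW f K).trans hfb)
          (by positivity)
      rwa [Real.pow_rpow_inv_natCast hC₀0 hjk.ne'] at h2
    calc b ^ (((j * k : ℕ):ℝ)⁻¹) ≤ (coneSpecRad (h^[j]) K) ^ (((j * k : ℕ):ℝ)⁻¹) :=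
      Real.rpow_le_rpow hb0.le hrad (by positivity)
      _ ≤ genTerm A K (j * k) := le_csSup hbdd hmem
  have hsup : genTerm A K (j * k) ≤ genRad A K := by
    have hba : BddAbove (Set.range fun m : ℕ+ => genTerm A K (m : ℕ)) :=
      ⟨C₀, by rintro v ⟨m, rfl⟩; exact hgenle m⟩
    have := le_ciSup hba (⟨j * k, hjk⟩ : ℕ+)
    exact this
  have hone : 1 < b ^ (((j * k : ℕ):ℝ)⁻¹) := by
    rw [Real.one_lt_rpow_iff_of_pos hb0]
    left
    refine ⟨hb1, by positivity⟩
  have : (1:ℝ) < 1 := by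
    calc (1:ℝ) < b ^ (((j * k : ℕ):ℝ)⁻¹) := hone
      _ ≤ genTerm A K (j * k) := hterm
      _ ≤ genRad A K := hsup
      _ = 1 := hr
  exact lt_irrefl 1 this

end Aux

theorem statement12 {X : Type*} [NormedAddCommGroup X] [NormedSpace ℝ X]
    [FiniteDimensional ℝ X]
    (K : Set X) (hK : IsClosedCone K) (hint : (interior K).Nonempty)
    (A : Set (X → X))
    (hA : ∀ f ∈ A, ContinuousOn f K ∧ HomogOn f K ∧ OrderPresOn f K)
    (hbdd : BoundedFamOn A K)
    (hprim : ∀ x ∈ K, x ≠ 0 → ∃ m : ℕ, 0 < m ∧ ∃ f ∈ famPow A m, f x ∈ interior K)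
    (hr : genRad A K = 1) :
    ∃ C : ℝ, ∀ m : ℕ, 0 < m → ∀ f ∈ famPow A m, ∀ x ∈ K, ‖f x‖ ≤ C * ‖x‖ := by
  classical
  by_cases htriv : ∀ x : X, x = 0
  · refine ⟨0, fun m hm g hg x hx => ?_⟩
    rw [htriv (g x), htriv x]; simp
  push_neg at htriv
  obtain ⟨x₀, hx₀⟩ := htriv
  have hnx₀ : 0 < ‖x₀‖ := norm_pos_iff.mpr hx₀
  -- a nonzero interior point
  obtain ⟨u, huint, hu0⟩ : ∃ u ∈ interior K, u ≠ 0 := by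
    obtain ⟨u₀, hu₀⟩ := hint
    by_cases h : u₀ = 0
    · subst h
      obtain ⟨r, hr0, hball⟩ := Metric.mem_nhds_iff.mp (mem_interior_iff_mem_nhds.mp hu₀)
      have hsub : Metric.ball (0:X) r ⊆ interior K :=
        interior_maximal hball Metric.isOpen_ball
      refine ⟨(r/2) • (‖x₀‖⁻¹ • x₀), hsub ?_, ?_⟩
      · rw [Metric.mem_ball, dist_zero_right, norm_smul, norm_smul, norm_inv, norm_norm,
          Real.norm_eq_abs, abs_of_pos (by positivity)]
        rw [inv_mul_cancel₀ hnx₀.ne', mul_one]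
        linarith
      · intro hcon
        apply hx₀
        have h1 : (r/2) • (‖x₀‖⁻¹ • x₀) = ((r/2) * ‖x₀‖⁻¹) • x₀ := by rw [smul_smul]
        rw [h1] at hcon
        have h2 : (r/2) * ‖x₀‖⁻¹ ≠ 0 := by positivity
        exact (smul_eq_zero.mp hcon).resolve_left h2
    · exact ⟨u₀, hu₀, h⟩
  have huK : u ∈ K := interior_subset huint
  have hnu : 0 < ‖u‖ := norm_pos_iff.mpr hu0
  -- interior ball at u
  obtain ⟨r, hr0, hballu⟩ := Metric.mem_nhds_iff.mp (mem_interior_iff_mem_nhds.mp huint)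
  set ρ : ℝ := r / 2 with hρdef
  have hρ0 : 0 < ρ := by positivity
  have hρball : ∀ v : X, ‖v - u‖ ≤ ρ → v ∈ K := by
    intro v hv
    apply hballu
    rw [Metric.mem_ball, dist_eq_norm]
    rw [hρdef] at hv; linarith
  -- constants
  obtain ⟨C, hC⟩ := hbdd
  set C₀ : ℝ := max C 1 with hC₀def
  have hC₀ : 1 ≤ C₀ := le_max_right _ _
  have hCb : ∀ f ∈ A, ∀ x ∈ K, ‖f x‖ ≤ C₀ * ‖x‖ := fun f hf x hx =>
    (hC f hf x hx).trans (mul_le_mul_of_nonneg_right (le_max_left _ _) (norm_nonneg _))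
  obtain ⟨N, hN1, hNorm⟩ := normality hK
  have hN0 : (0:ℝ) < N := lt_of_lt_of_le one_pos hN1
  have P := famPow_props hK hA (zero_le_one.trans hC₀) hCb
  -- unit sphere of K
  set S : Set X := {x ∈ K | ‖x‖ = 1} with hSdef
  have hSclosed : IsClosed S :=
    hK.1.inter (isClosed_eq continuous_norm continuous_const)
  have hScomp : IsCompact S := by
    apply Metric.isCompact_of_isClosed_isBounded hSclosed
    apply Bornology.IsBounded.subset (Metric.isBounded_closedBall (x := (0:X)) (r := 1))
    intro x hx
    rw [Metric.mem_closedBall, dist_zero_right]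
    exact le_of_eq hx.2
  -- local primitivity data
  have hlocal : ∀ x ∈ S, ∃ (k : ℕ) (f : X → X) (ε : ℝ) (O : Set X),
      0 < k ∧ f ∈ famPow A k ∧ 0 < ε ∧ IsOpen O ∧ x ∈ O ∧
      ∀ y ∈ O ∩ K, f y - ε • u ∈ K := by
    rintro x ⟨hxK, hx1⟩
    have hx0 : x ≠ 0 := by
      intro h; rw [h, norm_zero] at hx1; exact one_ne_zero hx1.symm
    obtain ⟨k, hk, f, hf, hfx⟩ := hprim x hxK hx0
    obtain ⟨r', hr'0, hball'⟩ := Metric.mem_nhds_iff.mp (mem_interior_iff_mem_nhds.mp hfx)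
    set ε : ℝ := r' / (4 * ‖u‖) with hεdef
    have hε : 0 < ε := by positivity
    have hεu : ε * ‖u‖ = r' / 4 := by rw [hεdef]; field_simp
    have hcw : ContinuousWithinAt f K x := ((P k f hf).2.2.2.1).continuousWithinAt hxK
    have hmem : f ⁻¹' (Metric.ball (f x) (r'/4)) ∈ 𝓝[K] x :=
      hcw (Metric.ball_mem_nhds _ (by positivity))
    obtain ⟨O, hOopen, hxO, hOsub⟩ := mem_nhdsWithin.mp hmem
    refine ⟨k, f, ε, O, hk, hf, hε, hOopen, hxO, ?_⟩
    rintro y ⟨hyO, hyK⟩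
    apply hball'
    rw [Metric.mem_ball, dist_eq_norm]
    have h1 : ‖f y - f x‖ < r'/4 := by
      have := hOsub ⟨hyO, hyK⟩
      rwa [Set.mem_preimage, Metric.mem_ball, dist_eq_norm] at this
    have h2 : f y - ε • u - f x = (f y - f x) - ε • u := by abel
    rw [h2]
    calc ‖(f y - f x) - ε • u‖ ≤ ‖f y - f x‖ + ‖ε • u‖ := norm_sub_le _ _
      _ = ‖f y - f x‖ + ε * ‖u‖ := by
        rw [norm_smul, Real.norm_eq_abs, abs_of_pos hε]
      _ < r'/4 + r'/4 := by rw [hεu]; linarith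
      _ < r' := by linarith
  choose! deg ff εf Of hdeg hff hεf hOopen hxOf hloc using hlocal
  obtain ⟨t, htS, hcov⟩ := hScomp.elim_nhds_subcover Of
    (fun x hx => (hOopen x hx).mem_nhds (hxOf x hx))
  -- S is nonempty
  have hv₀S : ‖u‖⁻¹ • u ∈ S := by
    refine ⟨coneSmul hK (by positivity) huK, ?_⟩
    rw [norm_smul, norm_inv, norm_norm, inv_mul_cancel₀ hnu.ne']
  have tne : t.Nonempty := by
    have := hcov hv₀S
    simp only [Set.mem_iUnion, exists_prop] at this
    obtain ⟨x, hxt, _⟩ := this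
    exact ⟨x, hxt⟩
  set ε₀ : ℝ := t.inf' tne εf with hε₀def
  have hε₀ : 0 < ε₀ :=
    (Finset.lt_inf'_iff tne).mpr fun x hx => hεf x (htS x hx)
  have hcover : ∀ y ∈ S, ∃ x ∈ t, ff x y - ε₀ • u ∈ K := by
    intro y hy
    have := hcov hy
    simp only [Set.mem_iUnion, exists_prop] at this
    obtain ⟨x, hxt, hyO⟩ := this
    refine ⟨x, hxt, ?_⟩
    have h1 := hloc x (htS x hxt) y ⟨hyO, hy.1⟩
    have h2 : (εf x - ε₀) • u ∈ K :=
      coneSmul hK (sub_nonneg.mpr (Finset.inf'_le _ hxt)) huK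
    have h3 := coneAdd hK h1 h2
    have h4 : (ff x y - εf x • u) + (εf x - ε₀) • u = ff x y - ε₀ • u := by
      rw [sub_smul]; abel
    rwa [h4] at h3
  -- bound on ‖g u‖
  have hgu : ∀ m : ℕ, 0 < m → ∀ g ∈ famPow A m, ‖g u‖ ≤ ε₀⁻¹ := by
    intro m hm g hg
    by_contra hcon
    push_neg at hcon
    have hw0 : g u ≠ 0 := by
      intro h; rw [h, norm_zero] at hcon
      have : (0:ℝ) < ε₀⁻¹ := by positivity
      linarith
    have hwK : g u ∈ K := (P m g hg).1 huK
    have hnw : 0 < ‖g u‖ := norm_pos_iff.mpr hw0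
    set y : X := ‖g u‖⁻¹ • g u with hydef
    have hyS : y ∈ S := by
      refine ⟨coneSmul hK (by positivity) hwK, ?_⟩
      rw [hydef, norm_smul, norm_inv, norm_norm, inv_mul_cancel₀ hnw.ne']
    obtain ⟨x, hxt, hxy⟩ := hcover y hyS
    have hffx := hff x (htS x hxt)
    have hhom := (P _ _ hffx).2.1 (‖g u‖⁻¹) (by positivity) (g u) hwK
    have h2 : ff x (g u) = ‖g u‖ • ff x y := by
      rw [hydef, hhom, smul_smul, mul_inv_cancel₀ hnw.ne', one_smul]
    have h3 := coneSmul hK hnw.le hxy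
    rw [smul_sub, ← h2, smul_smul] at h3
    rw [mul_comm] at h3
    have hkey : (ff x ∘ g) u - (ε₀ * ‖g u‖) • u ∈ K := h3
    have hc1 : 1 < ε₀ * ‖g u‖ := by
      have h5 : ε₀ * ε₀⁻¹ < ε₀ * ‖g u‖ := mul_lt_mul_of_pos_left hcon hε₀
      rwa [mul_inv_cancel₀ hε₀.ne'] at h5
    exact keyLemma hK hA hC₀ hCb hN1 hNorm huK hu0
      (Nat.add_pos_left (hdeg x (htS x hxt)) m) (famPow_comp hffx hg) hc1 hkey hr
  -- conclusion
  refine ⟨N * ρ⁻¹ * ε₀⁻¹, ?_⟩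
  intro m hm g hg x hx
  by_cases hx0 : x = 0
  · subst hx0
    have h2 := (P m g hg).2.1 2 (by norm_num) 0 (coneZero hK)
    rw [smul_zero] at h2
    have h3 : (2:ℝ) • g 0 - g 0 = g 0 := by rw [two_smul]; abel
    have h4 : g 0 - g 0 = (2:ℝ) • g 0 - g 0 := by rw [← h2]
    rw [h3, sub_self] at h4
    rw [← h4]; simp
  · have hnx : 0 < ‖x‖ := norm_pos_iff.mpr hx0
    set x' : X := ‖x‖⁻¹ • x with hx'def
    have hx'K : x' ∈ K := coneSmul hK (by positivity) hx
    have hx'1 : ‖x'‖ = 1 := by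
      rw [hx'def, norm_smul, norm_inv, norm_norm, inv_mul_cancel₀ hnx.ne']
    have hord : ρ⁻¹ • u - x' ∈ K := by
      have h1 : u - ρ • x' ∈ K := by
        apply hρball
        have heq : u - ρ • x' - u = -(ρ • x') := by abel
        rw [heq, norm_neg, norm_smul, hx'1, Real.norm_eq_abs, abs_of_pos hρ0, mul_one]
      have h2 := coneSmul hK (inv_nonneg.mpr hρ0.le) h1
      rwa [smul_sub, smul_smul, inv_mul_cancel₀ hρ0.ne', one_smul] at h2
    have hmono := (P m g hg).2.2.1 x' hx'K (ρ⁻¹ • u)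
      (coneSmul hK (inv_nonneg.mpr hρ0.le) huK) hord
    have hgρ : g (ρ⁻¹ • u) = ρ⁻¹ • g u := (P m g hg).2.1 ρ⁻¹ (by positivity) u huK
    have hgx'K : g x' ∈ K := (P m g hg).1 hx'K
    have hguK : g u ∈ K := (P m g hg).1 huK
    have hb := hNorm _ hgx'K _ (coneSmul hK (inv_nonneg.mpr hρ0.le) hguK)
      (by rwa [hgρ] at hmono)
    rw [norm_smul, Real.norm_eq_abs, abs_inv, abs_of_pos hρ0] at hb
    have hgub := hgu m hm g hg
    have hfin : ‖g x'‖ ≤ N * ρ⁻¹ * ε₀⁻¹ := by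
      calc ‖g x'‖ ≤ N * (ρ⁻¹ * ‖g u‖) := hb
        _ ≤ N * (ρ⁻¹ * ε₀⁻¹) :=
          mul_le_mul_of_nonneg_left
            (mul_le_mul_of_nonneg_left hgub (inv_nonneg.mpr hρ0.le)) hN0.le
        _ = N * ρ⁻¹ * ε₀⁻¹ := by ring
    have hgx : g x = ‖x‖ • g x' := by
      have h5 := (P m g hg).2.1 (‖x‖⁻¹) (by positivity) x hx
      rw [hx'def, h5, smul_smul, mul_inv_cancel₀ hnx.ne', one_smul]
    rw [hgx, norm_smul, norm_norm]
    calc ‖x‖ * ‖g x'‖ ≤ ‖x‖ * (N * ρ⁻¹ * ε₀⁻¹) :=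
      mul_le_mul_of_nonneg_left hfin hnx.le
      _ = N * ρ⁻¹ * ε₀⁻¹ * ‖x‖ := by ring
end
end

section
/- Let 𝒜 be a compact, irreducible family of subadditive, order-preserving, homogeneous maps on ℝⁿ_{≥0} with r̂(𝒜) = 1, and suppose ‖·‖_* is a monotone extremal norm for 𝒜. Then ‖x‖_{**} := lim_{m→∞} sup_{f ∈ 𝒜^m} ‖f(|x|)‖_* is a well-defined Barabanov norm for 𝒜: it is a norm, it satisfies ‖f(x)‖_{**} ≤ ‖x‖_{**} for all f ∈ 𝒜 and x ∈ ℝⁿ_{≥0}, and for every x ∈ ℝⁿ_{≥0} there exists g ∈ 𝒜 with ‖g(x)‖_{**} = ‖x‖_{**}. -/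
open Filter Topology Set

noncomputable section

/-- ‖x‖_{**} = lim_m sup_{f ∈ 𝒜^m} ‖f(|x|)‖_* (realized as an infimum of the
non-increasing sequence). -/
def nuStarStar {n : ℕ} (A : Set ((Fin n → ℝ) → Fin n → ℝ)) (νs : (Fin n → ℝ) → ℝ) :
    (Fin n → ℝ) → ℝ :=
  fun x => ⨅ m : ℕ, sSup ((fun f => νs (f (fun i => |x i|))) '' famPow A m)


section Helpers

variable {n : ℕ}

lemma stdCone_add {x y : Fin n → ℝ} (hx : x ∈ stdCone n) (hy : y ∈ stdCone n) :
    x + y ∈ stdCone n := fun i => add_nonneg (hx i) (hy i)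

lemma famPow_nonempty {X : Type*} {A : Set (X → X)} (hA : A.Nonempty) :
    ∀ m, (famPow A m).Nonempty := by
  intro m; induction m with
  | zero => exact ⟨id, rfl⟩
  | succ m ih =>
    obtain ⟨f, hf⟩ := hA; obtain ⟨g, hg⟩ := ih
    exact ⟨f ∘ g, f, hf, g, hg, rfl⟩

lemma famPow_succ_right {X : Type*} (A : Set (X → X)) (m : ℕ) :
    famPow A (m+1) = {h | ∃ g ∈ famPow A m, ∃ f ∈ A, h = g ∘ f} := by
  induction m with
  | zero =>
    ext h; constructor
    · rintro ⟨f, hf, g, hg, rfl⟩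
      have hg' : g = id := hg
      subst hg'
      exact ⟨id, rfl, f, hf, rfl⟩
    · rintro ⟨g, hg, f, hf, rfl⟩
      have hg' : g = id := hg
      subst hg'
      exact ⟨f, hf, id, rfl, rfl⟩
  | succ m ih =>
    ext h; constructor
    · rintro ⟨f, hf, g, hg, rfl⟩
      rw [ih] at hg
      obtain ⟨k, hk, f', hf', rfl⟩ := hg
      exact ⟨f ∘ k, ⟨f, hf, k, hk, rfl⟩, f', hf', rfl⟩
    · rintro ⟨g, hg, f, hf, rfl⟩
      obtain ⟨f', hf', k, hk, rfl⟩ := hg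
      have hmem : f' ∘ (k ∘ f) ∈ famPow A (m+1+1) := by
        refine ⟨f', hf', k ∘ f, ?_, rfl⟩
        rw [ih]; exact ⟨k, hk, f, hf, rfl⟩
      simpa [Function.comp_assoc] using hmem

lemma famPow_props_s15 {A : Set ((Fin n → ℝ) → Fin n → ℝ)}
    (hA : ∀ f ∈ A, HomogOn f (stdCone n) ∧ OrderPresOn f (stdCone n) ∧ SubaddOn f (stdCone n)) :
    ∀ m, ∀ g ∈ famPow A m,
      HomogOn g (stdCone n) ∧ OrderPresOn g (stdCone n) ∧ SubaddOn g (stdCone n) := by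
  intro m
  induction m with
  | zero =>
    intro g hg
    have hg' : g = id := hg
    subst hg'
    refine ⟨⟨fun x hx => hx, fun c hc x hx => rfl⟩, fun x hx y hy h => h, fun x hx y hy => ?_⟩
    intro i; simp
  | succ m ih =>
    rintro h ⟨f, hf, g, hg, rfl⟩
    obtain ⟨⟨gm, gh⟩, gop, gsub⟩ := ih g hg
    obtain ⟨⟨fm, fh⟩, fop, fsub⟩ := hA f hf
    refine ⟨⟨fm.comp gm, fun c hc x hx => ?_⟩, fun x hx y hy hxy => ?_, fun x hx y hy => ?_⟩
    · simp only [Function.comp_apply]; rw [gh c hc x hx, fh c hc _ (gm hx)]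
    · exact fop _ (gm hx) _ (gm hy) (gop x hx y hy hxy)
    · have hxyK : x + y ∈ stdCone n := stdCone_add hx hy
      have h1 : (g x + g y) - g (x + y) ∈ stdCone n := gsub x hx y hy
      have h2 : g x + g y ∈ stdCone n := stdCone_add (gm hx) (gm hy)
      have h3 : f (g x + g y) - f (g (x + y)) ∈ stdCone n := fop _ (gm hxyK) _ h2 h1
      have h4 : (f (g x) + f (g y)) - f (g x + g y) ∈ stdCone n := fsub _ (gm hx) _ (gm hy)
      intro i
      have h5 := add_nonneg (h3 i) (h4 i)
      simp only [Pi.add_apply, Pi.sub_apply, Function.comp_apply] at h5 ⊢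
      linarith

lemma homog_map_zero {g : (Fin n → ℝ) → Fin n → ℝ} (h : HomogOn g (stdCone n)) : g 0 = 0 := by
  have h0 : (0 : Fin n → ℝ) ∈ stdCone n := fun i => le_refl 0
  have h2 := h.2 2 (by norm_num) 0 h0
  rw [smul_zero] at h2
  have h3 : g 0 + g 0 = g 0 := by
    rw [← two_smul ℝ (g 0)]; exact h2.symm
  exact add_eq_left.mp h3

lemma subadd_sum_le {n : ℕ} {ι : Type*} {φ : (Fin n → ℝ) → ℝ} (h0 : φ 0 = 0)
    (hadd : ∀ x y, φ (x + y) ≤ φ x + φ y) (s : Finset ι) (g : ι → Fin n → ℝ) :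
    φ (∑ i ∈ s, g i) ≤ ∑ i ∈ s, φ (g i) := by
  classical
  induction s using Finset.induction_on with
  | empty => simp [h0]
  | insert _ _ hi ih =>
    rename_i a s
    rw [Finset.sum_insert hi, Finset.sum_insert hi]
    exact (hadd _ _).trans (by linarith)

/-- The defining non-increasing sequence for the Barabanov norm. -/
def aSeq {n : ℕ} (A : Set ((Fin n → ℝ) → Fin n → ℝ)) (νs : (Fin n → ℝ) → ℝ)
    (m : ℕ) (x : Fin n → ℝ) : ℝ :=
  sSup ((fun f => νs (f (fun i => |x i|))) '' famPow A m)

end Helpers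

theorem statement15 {n : ℕ} (A : Set ((Fin n → ℝ) → Fin n → ℝ))
    (hA : ∀ f ∈ A, HomogOn f (stdCone n) ∧ OrderPresOn f (stdCone n) ∧
      SubaddOn f (stdCone n))
    (hcomp : IsCompact {g : C(({x | x ∈ stdCone n ∧ ‖x‖ ≤ 1} : Set (Fin n → ℝ)), Fin n → ℝ) |
      ∃ f ∈ A, ∀ z, g z = f z.1})
    (hirr : IrreducibleFam A)
    (hr : jointRad A (stdCone n) = 1)
    (νs : (Fin n → ℝ) → ℝ)
    (hν1 : ∀ x y, νs (x + y) ≤ νs x + νs y)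
    (hν2 : ∀ (c : ℝ) (x), νs (c • x) = |c| * νs x)
    (hν3 : ∀ x, νs x = 0 ↔ x = 0)
    (hν4 : ∀ x, 0 ≤ νs x)
    (hν5 : ∀ x y : Fin n → ℝ, (∀ i, 0 ≤ x i) → (∀ i, x i ≤ y i) → νs x ≤ νs y)
    (hext : ∀ f ∈ A, ∀ x ∈ stdCone n, νs (f x) ≤ νs x) :
    (∀ x, Tendsto (fun m : ℕ => sSup ((fun f => νs (f (fun i => |x i|))) '' famPow A m))
      atTop (𝓝 (nuStarStar A νs x))) ∧
    (∀ x y, nuStarStar A νs (x + y) ≤ nuStarStar A νs x + nuStarStar A νs y) ∧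
    (∀ (c : ℝ) (x), nuStarStar A νs (c • x) = |c| * nuStarStar A νs x) ∧
    (∀ x, nuStarStar A νs x = 0 ↔ x = 0) ∧
    (∀ x, 0 ≤ nuStarStar A νs x) ∧
    (∀ f ∈ A, ∀ x ∈ stdCone n, nuStarStar A νs (f x) ≤ nuStarStar A νs x) ∧
    (∀ x ∈ stdCone n, ∃ g ∈ A, nuStarStar A νs (g x) = nuStarStar A νs x) := by
  classical
  have hK0 : (0 : Fin n → ℝ) ∈ stdCone n := fun i => le_refl 0
  have hν0 : νs 0 = 0 := (hν3 0).mpr rfl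
  have habs : ∀ x : Fin n → ℝ, (fun i => |x i|) ∈ stdCone n := fun x i => abs_nonneg _
  have habs_eq : ∀ x ∈ stdCone n, (fun i => |x i|) = x := by
    intro x hx; funext i; exact abs_of_nonneg (hx i)
  have hP := famPow_props_s15 hA
  have hmapsTo : ∀ m, ∀ g ∈ famPow A m, Set.MapsTo g (stdCone n) (stdCone n) :=
    fun m g hg => (hP m g hg).1.1
  have hop : ∀ m, ∀ g ∈ famPow A m, OrderPresOn g (stdCone n) := fun m g hg => (hP m g hg).2.1
  have hsa : ∀ m, ∀ g ∈ famPow A m, SubaddOn g (stdCone n) := fun m g hg => (hP m g hg).2.2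
  have hcw : ∀ u v : Fin n → ℝ, v - u ∈ stdCone n → ∀ i, u i ≤ v i := by
    intro u v h i; have := h i; simp only [Pi.sub_apply] at this; linarith
  have hsubK : ∀ u v : Fin n → ℝ, (∀ i, u i ≤ v i) → v - u ∈ stdCone n := by
    intro u v h i; exact sub_nonneg.mpr (h i)
  -- extremality along famPow
  have hb : ∀ m, ∀ g ∈ famPow A m, ∀ x ∈ stdCone n, νs (g x) ≤ νs x := by
    intro m
    induction m with
    | zero => intro g hg x hx; have hg' : g = id := hg; subst hg'; exact le_refl _
    | succ m ih =>
      rintro h ⟨f, hf, g, hg, rfl⟩ x hx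
      exact le_trans (hext f hf _ (hmapsTo m g hg hx)) (ih g hg x hx)
  -- A is nonempty
  have hjt_nonneg : ∀ m : ℕ+, 0 ≤ jointTerm A (stdCone n) (m : ℕ) := by
    intro m
    apply Real.sSup_nonneg
    rintro r ⟨f, -, rfl⟩
    apply Real.rpow_nonneg
    apply Real.sSup_nonneg
    rintro r ⟨x, -, rfl⟩
    exact norm_nonneg _
  have hbddJT : BddBelow (Set.range fun m : ℕ+ => jointTerm A (stdCone n) (m : ℕ)) := by
    refine ⟨0, ?_⟩; rintro r ⟨m, rfl⟩; exact hjt_nonneg m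
  have hAne : A.Nonempty := by
    by_contra hA0
    rw [Set.not_nonempty_iff_eq_empty] at hA0
    have h1 : famPow A 1 = (∅ : Set _) := by
      ext g
      constructor
      · rintro ⟨f, hf, -⟩; rw [hA0] at hf; exact hf
      · intro h; exact absurd h (Set.notMem_empty g)
    have h2 : jointTerm A (stdCone n) ((1:ℕ+) : ℕ) = 0 := by
      show sSup _ = 0
      rw [show ((1:ℕ+):ℕ) = 1 from rfl, h1, Set.image_empty, Real.sSup_empty]
    have h3 : jointRad A (stdCone n) ≤ jointTerm A (stdCone n) ((1:ℕ+) : ℕ) :=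
      ciInf_le hbddJT (1 : ℕ+)
    rw [h2, hr] at h3; linarith
  have hfne : ∀ m, (famPow A m).Nonempty := famPow_nonempty hAne
  have hne : ∀ (m : ℕ) (x : Fin n → ℝ),
      ((fun f => νs (f (fun i => |x i|))) '' famPow A m).Nonempty :=
    fun m x => (hfne m).image _
  have hbdd : ∀ (m : ℕ) (x : Fin n → ℝ),
      BddAbove ((fun f => νs (f (fun i => |x i|))) '' famPow A m) := by
    intro m x
    refine ⟨νs (fun i => |x i|), ?_⟩
    rintro r ⟨g, hg, rfl⟩
    exact hb m g hg _ (habs x)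
  have ha_nonneg : ∀ (m : ℕ) (x : Fin n → ℝ), 0 ≤ aSeq A νs m x := by
    intro m x; apply Real.sSup_nonneg; rintro r ⟨g, hg, rfl⟩; exact hν4 _
  have hmem_a : ∀ (m : ℕ) (x : Fin n → ℝ), ∀ g ∈ famPow A m,
      νs (g (fun i => |x i|)) ≤ aSeq A νs m x :=
    fun m x g hg => le_csSup (hbdd m x) ⟨g, hg, rfl⟩
  have hanti : ∀ x : Fin n → ℝ, Antitone (fun m => aSeq A νs m x) := by
    intro x
    apply antitone_nat_of_succ_le
    intro m
    apply Real.sSup_le _ (ha_nonneg m x)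
    rintro r ⟨h, ⟨f, hf, g, hg, rfl⟩, rfl⟩
    calc νs ((f ∘ g) (fun i => |x i|)) ≤ νs (g (fun i => |x i|)) :=
        hext f hf _ (hmapsTo m g hg (habs x))
      _ ≤ aSeq A νs m x := hmem_a m x g hg
  -- Goal 1 : convergence
  have h1 : ∀ x, Tendsto (fun m : ℕ => sSup ((fun f => νs (f (fun i => |x i|))) '' famPow A m))
      atTop (𝓝 (nuStarStar A νs x)) := by
    intro x
    have : Tendsto (fun m => aSeq A νs m x) atTop (𝓝 (⨅ m, aSeq A νs m x)) :=
      tendsto_atTop_ciInf (hanti x) ⟨0, by rintro r ⟨m, rfl⟩; exact ha_nonneg m x⟩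
    exact this
  have hφ_le : ∀ (x : Fin n → ℝ) (m : ℕ), nuStarStar A νs x ≤ aSeq A νs m x := by
    intro x m
    exact ciInf_le ⟨0, by rintro r ⟨k, rfl⟩; exact ha_nonneg k x⟩ m
  have hφ_nonneg : ∀ x, 0 ≤ nuStarStar A νs x := fun x => Real.iInf_nonneg (fun m => ha_nonneg m x)
  -- Goal 2 : subadditivity
  have ha_add : ∀ (m : ℕ) (x y : Fin n → ℝ), aSeq A νs m (x + y) ≤ aSeq A νs m x + aSeq A νs m y := by
    intro m x y
    apply Real.sSup_le _ (add_nonneg (ha_nonneg m x) (ha_nonneg m y))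
    rintro r ⟨g, hg, rfl⟩
    have m1 : ((fun i => |x i|) + fun i => |y i|) ∈ stdCone n := stdCone_add (habs x) (habs y)
    have h1cw : ∀ i, (fun i => |(x + y) i|) i ≤ ((fun i => |x i|) + fun i => |y i|) i := by
      intro i
      simp only [Pi.add_apply]
      exact abs_add_le _ _
    have s1 := hop m g hg _ (habs (x + y)) _ m1 (hsubK _ _ h1cw)
    have s2 := hsa m g hg _ (habs x) _ (habs y)
    calc νs (g fun i => |(x + y) i|) ≤ νs (g ((fun i => |x i|) + fun i => |y i|)) :=
        hν5 _ _ (hmapsTo m g hg (habs (x + y))) (hcw _ _ s1)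
      _ ≤ νs (g (fun i => |x i|) + g (fun i => |y i|)) :=
        hν5 _ _ (hmapsTo m g hg m1) (hcw _ _ s2)
      _ ≤ νs (g (fun i => |x i|)) + νs (g (fun i => |y i|)) := hν1 _ _
      _ ≤ aSeq A νs m x + aSeq A νs m y := add_le_add (hmem_a m x g hg) (hmem_a m y g hg)
  have hsub : ∀ x y, nuStarStar A νs (x + y) ≤ nuStarStar A νs x + nuStarStar A νs y := by
    intro x y
    have hlim : Tendsto (fun m => aSeq A νs m x + aSeq A νs m y) atTop
        (𝓝 (nuStarStar A νs x + nuStarStar A νs y)) := (h1 x).add (h1 y)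
    exact ge_of_tendsto' hlim (fun m => (hφ_le (x + y) m).trans (ha_add m x y))
  -- Goal 3 : homogeneity
  have ha_zero : ∀ m : ℕ, aSeq A νs m 0 = 0 := by
    intro m
    apply le_antisymm _ (ha_nonneg m 0)
    apply Real.sSup_le _ le_rfl
    rintro r ⟨g, hg, rfl⟩
    beta_reduce
    have h0 : (fun i => |(0 : Fin n → ℝ) i|) = 0 := by funext i; simp
    rw [h0, homog_map_zero (hP m g hg).1, hν0]
  have hφ0 : nuStarStar A νs 0 = 0 := by
    rw [show nuStarStar A νs 0 = ⨅ m, aSeq A νs m 0 from rfl]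
    simp [ha_zero, ciInf_const]
  have ha_smul : ∀ (c : ℝ), c ≠ 0 → ∀ (m : ℕ) (x : Fin n → ℝ),
      aSeq A νs m (c • x) = |c| * aSeq A νs m x := by
    intro c hc m x
    have hca : 0 < |c| := abs_pos.mpr hc
    have key : ∀ g ∈ famPow A m,
        νs (g (fun i => |(c • x) i|)) = |c| * νs (g (fun i => |x i|)) := by
      intro g hg
      have habsc : (fun i => |(c • x) i|) = |c| • fun i => |x i| := by
        funext i; simp [Pi.smul_apply, abs_mul, smul_eq_mul]
      rw [habsc, (hP m g hg).1.2 |c| hca _ (habs x), hν2, abs_abs]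
    apply le_antisymm
    · apply Real.sSup_le _ (mul_nonneg (abs_nonneg c) (ha_nonneg m x))
      rintro r ⟨g, hg, rfl⟩
      beta_reduce
      rw [key g hg]
      exact mul_le_mul_of_nonneg_left (hmem_a m x g hg) (abs_nonneg c)
    · have h2 : aSeq A νs m x ≤ |c|⁻¹ * aSeq A νs m (c • x) := by
        apply Real.sSup_le _ (mul_nonneg (inv_nonneg.mpr (abs_nonneg c)) (ha_nonneg m _))
        rintro r ⟨g, hg, rfl⟩
        beta_reduce
        have hm := hmem_a m (c • x) g hg
        rw [key g hg] at hm
        calc νs (g fun i => |x i|) = |c|⁻¹ * (|c| * νs (g fun i => |x i|)) := by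
              field_simp
          _ ≤ |c|⁻¹ * aSeq A νs m (c • x) :=
              mul_le_mul_of_nonneg_left hm (inv_nonneg.mpr (abs_nonneg c))
      calc |c| * aSeq A νs m x ≤ |c| * (|c|⁻¹ * aSeq A νs m (c • x)) :=
            mul_le_mul_of_nonneg_left h2 (abs_nonneg c)
        _ = aSeq A νs m (c • x) := by field_simp
  have hhom : ∀ (c : ℝ) (x : Fin n → ℝ), nuStarStar A νs (c • x) = |c| * nuStarStar A νs x := by
    intro c x
    rcases eq_or_ne c 0 with rfl | hc
    · rw [zero_smul, hφ0, abs_zero, zero_mul]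
    · have t1 : Tendsto (fun m => aSeq A νs m (c • x)) atTop (𝓝 (nuStarStar A νs (c • x))) :=
        h1 (c • x)
      have t2 : Tendsto (fun m => aSeq A νs m (c • x)) atTop (𝓝 (|c| * nuStarStar A νs x)) := by
        have := (h1 x).const_mul |c|
        refine this.congr ?_
        intro m; exact (ha_smul c hc m x).symm
      exact tendsto_nhds_unique t1 t2
  -- Goal 6 : extremality of the limit norm
  have ha0_eq : ∀ x ∈ stdCone n, aSeq A νs 0 x = νs x := by
    intro x hx
    have himg : (fun f : (Fin n → ℝ) → (Fin n → ℝ) => νs (f (fun i => |x i|))) '' famPow A 0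
        = {νs x} := by
      rw [show famPow A 0 = {id} from rfl, Set.image_singleton, habs_eq x hx]
      rfl
    show sSup _ = νs x
    rw [himg, csSup_singleton]
  have hextφ : ∀ f ∈ A, ∀ x ∈ stdCone n, nuStarStar A νs (f x) ≤ nuStarStar A νs x := by
    intro f hf x hx
    have hfK : f x ∈ stdCone n := (hA f hf).1.1 hx
    refine le_ciInf fun m => ?_
    rcases m with _ | m
    · show nuStarStar A νs (f x) ≤ aSeq A νs 0 x
      rw [ha0_eq x hx]
      exact (hφ_le (f x) 0).trans (by rw [ha0_eq (f x) hfK]; exact hext f hf x hx)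
    · refine (hφ_le (f x) m).trans ?_
      apply Real.sSup_le _ (ha_nonneg (m+1) x)
      rintro r ⟨g, hg, rfl⟩
      have hgf : g ∘ f ∈ famPow A (m+1) := by
        rw [famPow_succ_right]; exact ⟨g, hg, f, hf, rfl⟩
      rw [habs_eq (f x) hfK]
      have h2 := hmem_a (m+1) x (g ∘ f) hgf
      rw [habs_eq x hx] at h2
      exact h2
  -- monotonicity of the limit norm on the cone
  have hφ_mono : ∀ u v : Fin n → ℝ, u ∈ stdCone n → v ∈ stdCone n → (∀ i, u i ≤ v i) →
      nuStarStar A νs u ≤ nuStarStar A νs v := by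
    intro u v hu hv huv
    refine le_ciInf fun m => (hφ_le u m).trans ?_
    apply Real.sSup_le _ (ha_nonneg m v)
    rintro r ⟨g, hg, rfl⟩
    rw [habs_eq u hu]
    have hgu : g u ∈ stdCone n := hmapsTo m g hg hu
    have hd := hop m g hg u hu v hv (hsubK _ _ huv)
    calc νs (g u) ≤ νs (g v) := hν5 _ _ hgu (hcw _ _ hd)
      _ ≤ aSeq A νs m v := by
          have := hmem_a m v g hg
          rw [habs_eq v hv] at this; exact this
  -- the n = 0 case is impossible
  have hn : 0 < n := by
    rcases Nat.eq_zero_or_pos n with h0 | h; swap; · exact h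
    exfalso
    subst h0
    have hempty : {x ∈ stdCone 0 | ‖x‖ = 1} = (∅ : Set (Fin 0 → ℝ)) := by
      ext x
      simp only [Set.mem_sep_iff, Set.mem_empty_iff_false, iff_false, not_and]
      intro _ hx1
      have hx : x = 0 := Subsingleton.elim x 0
      rw [hx, norm_zero] at hx1
      norm_num at hx1
    have h2 : jointTerm A (stdCone 0) ((1:ℕ+) : ℕ) ≤ 0 := by
      apply Real.sSup_le _ le_rfl
      rintro r ⟨f, hf, rfl⟩
      beta_reduce
      have hopn : opNormW f (stdCone 0) = 0 := by
        show sSup _ = 0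
        rw [hempty, Set.image_empty, Real.sSup_empty]
      rw [hopn]
      rw [Real.zero_rpow (by norm_num)]
    have h3 : jointRad A (stdCone 0) ≤ jointTerm A (stdCone 0) ((1:ℕ+) : ℕ) :=
      ciInf_le hbddJT (1 : ℕ+)
    rw [hr] at h3
    linarith
  haveI : Nonempty (Fin n) := ⟨⟨0, hn⟩⟩
  -- norm equivalence for νs
  set M : ℝ := ∑ i, νs (fun j => if i = j then (1:ℝ) else 0) with hMdef
  have hM0 : 0 ≤ M := Finset.sum_nonneg fun i _ => hν4 _
  have hνle : ∀ w : Fin n → ℝ, νs w ≤ M * ‖w‖ := by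
    intro w
    calc νs w = νs (∑ i, w i • fun j => if i = j then (1:ℝ) else 0) := by
          rw [← pi_eq_sum_univ w]
      _ ≤ ∑ i, νs (w i • fun j => if i = j then (1:ℝ) else 0) :=
          subadd_sum_le hν0 hν1 _ _
      _ ≤ ∑ i, ‖w‖ * νs (fun j => if i = j then (1:ℝ) else 0) := by
          apply Finset.sum_le_sum
          intro i _
          rw [hν2]
          refine mul_le_mul_of_nonneg_right ?_ (hν4 _)
          rw [← Real.norm_eq_abs]; exact norm_le_pi_norm w i
      _ = M * ‖w‖ := by rw [← Finset.mul_sum, mul_comm]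
  have hνlip : ∀ u v : Fin n → ℝ, νs u ≤ νs v + M * ‖u - v‖ := by
    intro u v
    have h2 := hν1 v (u - v)
    have h3 : v + (u - v) = u := by abel
    rw [h3] at h2
    linarith [hνle (u - v)]
  have hνcont : Continuous νs := by
    have hl : LipschitzWith (Real.toNNReal M) νs := by
      apply LipschitzWith.of_dist_le_mul
      intro u v
      rw [Real.dist_eq, dist_eq_norm, Real.coe_toNNReal M hM0, abs_sub_le_iff]
      constructor
      · linarith [hνlip u v]
      · have h4 := hνlip v u
        rw [norm_sub_rev v u] at h4
        linarith
    exact hl.continuous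
  have hsph : (Metric.sphere (0 : Fin n → ℝ) 1).Nonempty :=
    NormedSpace.sphere_nonempty.mpr zero_le_one
  obtain ⟨z, hzs, hzmin⟩ :=
    (isCompact_sphere (0 : Fin n → ℝ) 1).exists_isMinOn hsph hνcont.continuousOn
  have hz1 : ‖z‖ = 1 := mem_sphere_zero_iff_norm.mp hzs
  have hc0 : 0 < νs z := by
    rcases (hν4 z).lt_or_eq with h | h; · exact h
    exfalso
    have hz0 : z = 0 := (hν3 z).mp h.symm
    rw [hz0, norm_zero] at hz1; norm_num at hz1
  set c : ℝ := νs z with hcdef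
  have hclow : ∀ w : Fin n → ℝ, c * ‖w‖ ≤ νs w := by
    intro w
    rcases eq_or_ne w 0 with rfl | hw
    · simp [hν0]
    · have hnw : 0 < ‖w‖ := norm_pos_iff.mpr hw
      have hu : (‖w‖⁻¹ • w) ∈ Metric.sphere (0 : Fin n → ℝ) 1 := by
        rw [mem_sphere_zero_iff_norm, norm_smul, norm_inv, norm_norm, inv_mul_cancel₀ hnw.ne']
      have hmin : νs z ≤ νs (‖w‖⁻¹ • w) := isMinOn_iff.mp hzmin _ hu
      have h2 : νs (‖w‖⁻¹ • w) = ‖w‖⁻¹ * νs w := by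
        rw [hν2, abs_of_pos (inv_pos.mpr hnw)]
      rw [h2] at hmin
      calc c * ‖w‖ ≤ (‖w‖⁻¹ * νs w) * ‖w‖ := mul_le_mul_of_nonneg_right hmin hnw.le
        _ = νs w := by field_simp
  -- Goal 4 : positive definiteness
  have hpos : ∀ x : Fin n → ℝ, nuStarStar A νs x = 0 ↔ x = 0 := by
    intro x
    constructor
    swap
    · rintro rfl; exact hφ0
    intro h0
    by_contra hx0
    set y : Fin n → ℝ := fun i => |x i| with hydef
    have hyK : y ∈ stdCone n := habs x
    have hφy : nuStarStar A νs y = 0 := by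
      have hyabs : ∀ m, aSeq A νs m y = aSeq A νs m x := by
        intro m
        have habs2 : (fun i => |y i|) = fun i => |x i| := by
          funext i; simp only [hydef]; exact abs_abs _
        rw [aSeq, aSeq, habs2]
      rw [show nuStarStar A νs y = ⨅ m, aSeq A νs m y from rfl]
      simp only [hyabs]
      exact h0
    have hyne : ∃ i, 0 < y i := by
      by_contra hall
      push_neg at hall
      apply hx0
      funext i
      have h5 : y i = 0 := le_antisymm (hall i) (hyK i)
      exact abs_eq_zero.mp h5
    set e : Fin n → (Fin n → ℝ) := fun i => fun j => if i = j then (1:ℝ) else 0 with hedef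
    have heK : ∀ i, e i ∈ stdCone n := by
      intro i j
      simp only [hedef]
      split <;> norm_num
    have hnotall : ¬ ∀ i, nuStarStar A νs (e i) = 0 := by
      intro hall
      set one : Fin n → ℝ := fun _ => 1 with honedef
      have honeK : one ∈ stdCone n := fun i => zero_le_one
      have honee : one = ∑ i, e i := by
        funext j
        rw [Finset.sum_apply]
        simp [hedef, honedef]
      have hφone : nuStarStar A νs one = 0 := by
        refine le_antisymm ?_ (hφ_nonneg one)
        calc nuStarStar A νs one = nuStarStar A νs (∑ i, e i) := by rw [← honee]
          _ ≤ ∑ i, nuStarStar A νs (e i) := subadd_sum_le hφ0 hsub _ _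
          _ = 0 := by simp [hall]
      have htd1 : Tendsto (fun m => aSeq A νs m one) atTop (𝓝 0) := by
        have h6 := h1 one; rw [hφone] at h6; exact h6
      obtain ⟨m, hmlt, hm1⟩ := ((htd1.eventually_lt_const hc0).and (eventually_ge_atTop 1)).exists
      set q : ℝ := c⁻¹ * aSeq A νs m one with hqdef
      have hq0 : 0 ≤ q := mul_nonneg (inv_nonneg.mpr hc0.le) (ha_nonneg m one)
      have hq1 : q < 1 := by
        rw [hqdef]
        calc c⁻¹ * aSeq A νs m one < c⁻¹ * c := mul_lt_mul_of_pos_left hmlt (inv_pos.mpr hc0)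
          _ = 1 := inv_mul_cancel₀ hc0.ne'
      have hopn : ∀ g ∈ famPow A m, opNormW g (stdCone n) ≤ q := by
        intro g hg
        apply Real.sSup_le _ hq0
        rintro r ⟨w, ⟨hwK, hw1⟩, rfl⟩
        have hgw : g w ∈ stdCone n := hmapsTo m g hg hwK
        have hw_le : ∀ i, w i ≤ one i := by
          intro i
          have h7 : |w i| ≤ ‖w‖ := by rw [← Real.norm_eq_abs]; exact norm_le_pi_norm w i
          have h8 : w i ≤ |w i| := le_abs_self _
          simp only [honedef]
          rw [hw1] at h7
          linarith
        have hd := hop m g hg w hwK one honeK (hsubK w one hw_le)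
        have hν9 : νs (g w) ≤ νs (g one) := hν5 _ _ hgw (hcw _ _ hd)
        have hmem : νs (g one) ≤ aSeq A νs m one := by
          have := hmem_a m one g hg
          rw [habs_eq one honeK] at this; exact this
        calc ‖g w‖ = c⁻¹ * (c * ‖g w‖) := by field_simp
          _ ≤ c⁻¹ * νs (g w) :=
              mul_le_mul_of_nonneg_left (hclow (g w)) (inv_nonneg.mpr hc0.le)
          _ ≤ c⁻¹ * aSeq A νs m one :=
              mul_le_mul_of_nonneg_left (hν9.trans hmem) (inv_nonneg.mpr hc0.le)
      have hopn0 : ∀ g : (Fin n → ℝ) → Fin n → ℝ, 0 ≤ opNormW g (stdCone n) := by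
        intro g
        apply Real.sSup_nonneg
        rintro r ⟨w, -, rfl⟩
        exact norm_nonneg _
      have hjt : jointTerm A (stdCone n) m ≤ q ^ ((m:ℝ)⁻¹) := by
        apply Real.sSup_le _ (Real.rpow_nonneg hq0 _)
        rintro r ⟨g, hg, rfl⟩
        exact Real.rpow_le_rpow (hopn0 g) (hopn g hg) (by positivity)
      have hmpos : 0 < m := hm1
      have hminv : (0:ℝ) < (m:ℝ)⁻¹ := by
        have : (0:ℝ) < (m:ℝ) := by exact_mod_cast hmpos
        positivity
      have hlt1 : q ^ ((m:ℝ)⁻¹) < 1 := Real.rpow_lt_one hq0 hq1 hminv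
      have hjr : jointRad A (stdCone n) ≤ jointTerm A (stdCone n) ((⟨m, hmpos⟩ : ℕ+) : ℕ) :=
        ciInf_le hbddJT (⟨m, hmpos⟩ : ℕ+)
      rw [hr] at hjr
      have hcoe : jointTerm A (stdCone n) ((⟨m, hmpos⟩ : ℕ+) : ℕ) = jointTerm A (stdCone n) m := rfl
      rw [hcoe] at hjr
      linarith
    refine hirr ⟨{i | nuStarStar A νs (e i) = 0}, ?_, ?_, ?_⟩
    · obtain ⟨i, hi⟩ := hyne
      refine ⟨i, ?_⟩
      have hse : ∀ j, (y i • e i) j ≤ y j := by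
        intro j
        by_cases hij : i = j
        · subst hij; simp [hedef]
        · simp [hedef, hij, hyK j]
      have hseK : y i • e i ∈ stdCone n := by
        intro j
        have := mul_nonneg (hyK i) (heK i j)
        simpa [Pi.smul_apply, smul_eq_mul] using this
      have hmle := hφ_mono _ _ hseK hyK hse
      rw [hφy, hhom, abs_of_pos hi] at hmle
      have h3 := hφ_nonneg (e i)
      show nuStarStar A νs (e i) = 0
      nlinarith
    · intro hJ
      apply hnotall
      intro i
      have : i ∈ {i | nuStarStar A νs (e i) = 0} := hJ ▸ Set.mem_univ i
      exact this
    · intro f hf z' hz'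
      obtain ⟨hzK', hzJ⟩ := hz'
      have hzK : z' ∈ stdCone n := hzK'
      have hφz : nuStarStar A νs z' = 0 := by
        refine le_antisymm ?_ (hφ_nonneg z')
        have hz_eq : z' = ∑ i, z' i • e i := pi_eq_sum_univ z'
        calc nuStarStar A νs z' = nuStarStar A νs (∑ i, z' i • e i) := by rw [← hz_eq]
          _ ≤ ∑ i, nuStarStar A νs (z' i • e i) := subadd_sum_le hφ0 hsub _ _
          _ = 0 := by
            apply Finset.sum_eq_zero
            intro i _
            rw [hhom]
            by_cases hiJ : i ∈ {i | nuStarStar A νs (e i) = 0}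
            · rw [hiJ, mul_zero]
            · rw [hzJ i hiJ]; simp
      have hfzK : f z' ∈ stdCone n := (hA f hf).1.1 hzK
      have hφfz : nuStarStar A νs (f z') = 0 :=
        le_antisymm ((hextφ f hf z' hzK).trans_eq hφz) (hφ_nonneg (f z'))
      refine ⟨hfzK, ?_⟩
      intro i hiJ
      by_contra hne'
      have ht : 0 < f z' i := lt_of_le_of_ne (hfzK i) (Ne.symm hne')
      have hse : ∀ j, ((f z' i) • e i) j ≤ f z' j := by
        intro j
        by_cases hij : i = j
        · subst hij; simp [hedef]
        · simp [hedef, hij, hfzK j]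
      have hseK : (f z' i) • e i ∈ stdCone n := by
        intro j
        have := mul_nonneg (hfzK i) (heK i j)
        simpa [Pi.smul_apply, smul_eq_mul] using this
      have hmle := hφ_mono _ _ hseK hfzK hse
      rw [hφfz, hhom, abs_of_pos ht] at hmle
      have h3 := hφ_nonneg (e i)
      apply hiJ
      show nuStarStar A νs (e i) = 0
      nlinarith
  -- Lipschitz continuity of aSeq in its argument
  have ham_lip : ∀ (m : ℕ) (u v : Fin n → ℝ),
      aSeq A νs m u ≤ aSeq A νs m v + M * ‖u - v‖ := by
    intro m u v
    have hMuv : 0 ≤ M * ‖u - v‖ := mul_nonneg hM0 (norm_nonneg _)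
    apply Real.sSup_le _ (by linarith [ha_nonneg m v])
    rintro r ⟨g, hg, rfl⟩
    have h1cw : ∀ i, (fun i => |u i|) i ≤ ((fun i => |v i|) + fun i => |(u - v) i|) i := by
      intro i
      simp only [Pi.add_apply, Pi.sub_apply]
      have := abs_sub_abs_le_abs_sub (u i) (v i)
      linarith
    have havw : ((fun i => |v i|) + fun i => |(u - v) i|) ∈ stdCone n :=
      stdCone_add (habs v) (habs (u - v))
    have hd1 := hop m g hg _ (habs u) _ havw (hsubK _ _ h1cw)
    have hd2 := hsa m g hg _ (habs v) _ (habs (u - v))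
    have e4 : ‖(fun i => |(u - v) i|)‖ ≤ ‖u - v‖ := by
      rw [pi_norm_le_iff_of_nonneg (norm_nonneg _)]
      intro i
      rw [Real.norm_eq_abs, abs_abs]
      have := norm_le_pi_norm (u - v) i
      rwa [Real.norm_eq_abs] at this
    calc νs (g fun i => |u i|)
        ≤ νs (g ((fun i => |v i|) + fun i => |(u - v) i|)) :=
          hν5 _ _ (hmapsTo m g hg (habs u)) (hcw _ _ hd1)
      _ ≤ νs (g (fun i => |v i|) + g (fun i => |(u - v) i|)) :=
          hν5 _ _ (hmapsTo m g hg havw) (hcw _ _ hd2)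
      _ ≤ νs (g (fun i => |v i|)) + νs (g (fun i => |(u - v) i|)) := hν1 _ _
      _ ≤ aSeq A νs m v + M * ‖u - v‖ := by
          have e1 := hmem_a m v g hg
          have e2 : νs (g (fun i => |(u - v) i|)) ≤ νs (fun i => |(u - v) i|) :=
            hb m g hg _ (habs (u - v))
          have e3 := hνle (fun i => |(u - v) i|)
          have e5 := mul_le_mul_of_nonneg_left e4 hM0
          linarith
  have ham_cont : ∀ m : ℕ, Continuous (fun y : Fin n → ℝ => aSeq A νs m y) := by
    intro m
    have hl : LipschitzWith (Real.toNNReal M) (fun y : Fin n → ℝ => aSeq A νs m y) := by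
      apply LipschitzWith.of_dist_le_mul
      intro u v
      rw [Real.dist_eq, dist_eq_norm, Real.coe_toNNReal M hM0, abs_sub_le_iff]
      constructor
      · linarith [ham_lip m u v]
      · have h4 := ham_lip m v u
        rw [norm_sub_rev v u] at h4
        linarith
    exact hl.continuous
  -- continuity of maps in A on the cone
  have hlipA : ∀ f ∈ A, ContinuousOn f (stdCone n) := by
    intro f hf
    have honeK : (fun _ : Fin n => (1:ℝ)) ∈ stdCone n := fun i => zero_le_one
    set one : Fin n → ℝ := fun _ => (1:ℝ) with honedef
    set L : ℝ := ‖f one‖ with hLdef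
    have hL0 : 0 ≤ L := norm_nonneg _
    have key : ∀ u ∈ stdCone n, ∀ v ∈ stdCone n, ∀ i, f u i - f v i ≤ L * ‖u - v‖ := by
      intro u hu v hv i
      rcases eq_or_ne u v with rfl | huv
      · simp
      · have hr0 : 0 < ‖u - v‖ := by rwa [norm_pos_iff, sub_ne_zero]
        have hvr : v + ‖u - v‖ • one ∈ stdCone n := by
          intro j
          have h5 : (0:ℝ) ≤ ‖u - v‖ * 1 := by positivity
          have h5b := hv j
          show (0:ℝ) ≤ v j + ‖u - v‖ * one j
          simp only [honedef]
          linarith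
        have hcw1 : ∀ j, u j ≤ (v + ‖u - v‖ • one) j := by
          intro j
          have h6 : u j - v j ≤ |u j - v j| := le_abs_self _
          have h7 : |u j - v j| ≤ ‖u - v‖ := by
            have := norm_le_pi_norm (u - v) j
            rwa [Real.norm_eq_abs] at this
          simp only [Pi.add_apply, Pi.smul_apply, honedef, smul_eq_mul]
          linarith
        have hd1 := (hA f hf).2.1 u hu (v + ‖u - v‖ • one) hvr (hsubK _ _ hcw1)
        have hsmK : ‖u - v‖ • one ∈ stdCone n := by
          intro j
          simp only [Pi.smul_apply, honedef, smul_eq_mul]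
          positivity
        have hd2 := (hA f hf).2.2 v hv (‖u - v‖ • one) hsmK
        have hhm := (hA f hf).1.2 ‖u - v‖ hr0 one honeK
        have c1 : f u i ≤ f (v + ‖u - v‖ • one) i := by
          have := hd1 i; simp only [Pi.sub_apply] at this; linarith
        have c2 : f (v + ‖u - v‖ • one) i ≤ f v i + f (‖u - v‖ • one) i := by
          have := hd2 i; simp only [Pi.sub_apply, Pi.add_apply] at this; linarith
        have c3 : f (‖u - v‖ • one) i = ‖u - v‖ * f one i := by
          rw [hhm]; simp [Pi.smul_apply, smul_eq_mul]
        have c4 : f one i ≤ L := by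
          have h8 : |f one i| ≤ ‖f one‖ := by
            have := norm_le_pi_norm (f one) i
            rwa [Real.norm_eq_abs] at this
          have h9 : f one i ≤ |f one i| := le_abs_self _
          rw [hLdef]; linarith
        have c5 : f u i - f v i ≤ ‖u - v‖ * f one i := by linarith
        calc f u i - f v i ≤ ‖u - v‖ * f one i := c5
          _ ≤ ‖u - v‖ * L := mul_le_mul_of_nonneg_left c4 hr0.le
          _ = L * ‖u - v‖ := mul_comm _ _
    have hlip : LipschitzOnWith (Real.toNNReal L) f (stdCone n) := by
      apply LipschitzOnWith.of_dist_le_mul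
      intro u hu v hv
      rw [dist_eq_norm, dist_eq_norm, Real.coe_toNNReal L hL0]
      rw [pi_norm_le_iff_of_nonneg (mul_nonneg hL0 (norm_nonneg _))]
      intro i
      rw [Real.norm_eq_abs]
      have hk1 := key u hu v hv i
      have hk2 := key v hv u hu i
      rw [norm_sub_rev v u] at hk2
      rw [abs_le]
      constructor
      · simp only [Pi.sub_apply]; linarith
      · simp only [Pi.sub_apply]; linarith
    exact hlip.continuousOn
  -- Goal 7 : Barabanov property
  have hΩc : IsCompact {x : Fin n → ℝ | x ∈ stdCone n ∧ ‖x‖ ≤ 1} := by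
    have hcl : IsClosed (stdCone n) := by
      have hrepr : stdCone n = ⋂ i, {x : Fin n → ℝ | 0 ≤ x i} := by
        ext x; simp [stdCone, Set.mem_iInter]
      rw [hrepr]
      exact isClosed_iInter fun i => isClosed_le continuous_const (continuous_apply i)
    have hrepr2 : {x : Fin n → ℝ | x ∈ stdCone n ∧ ‖x‖ ≤ 1}
        = stdCone n ∩ Metric.closedBall 0 1 := by
      ext x; simp [mem_closedBall_zero_iff]
    rw [hrepr2]
    exact (isCompact_closedBall 0 1).inter_left hcl
  haveI : CompactSpace {x : Fin n → ℝ | x ∈ stdCone n ∧ ‖x‖ ≤ 1} :=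
    isCompact_iff_compactSpace.mp hΩc
  have hbar1 : ∀ x, x ∈ stdCone n → ‖x‖ ≤ 1 →
      ∃ g ∈ A, nuStarStar A νs (g x) = nuStarStar A νs x := by
    intro x hxK hx1
    have hsel : ∀ m : ℕ, ∃ f, f ∈ A ∧
        nuStarStar A νs x - 1/(m+1) ≤ aSeq A νs m (f x) := by
      intro m
      have hlt : aSeq A νs (m+1) x - 1/(m+1) < aSeq A νs (m+1) x := by
        have h5 : (0:ℝ) < 1/(m+1) := by positivity
        linarith
      obtain ⟨r, hrmem, hrgt⟩ := exists_lt_of_lt_csSup (hne (m+1) x) hlt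
      obtain ⟨h, hh, rfl⟩ := hrmem
      rw [famPow_succ_right] at hh
      obtain ⟨k, hk, f, hf, rfl⟩ := hh
      refine ⟨f, hf, ?_⟩
      have hfx : f x ∈ stdCone n := (hA f hf).1.1 hxK
      have hmem : νs (k (f x)) ≤ aSeq A νs m (f x) := by
        have := hmem_a m (f x) k hk
        rw [habs_eq (f x) hfx] at this; exact this
      beta_reduce at hrgt
      have heq : νs ((k ∘ f) (fun i => |x i|)) = νs (k (f x)) := by
        rw [habs_eq x hxK]; rfl
      rw [heq] at hrgt
      have h5 := hφ_le x (m+1)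
      linarith
    choose F hFA hFb using hsel
    have hFcont : ∀ m, Continuous
        (fun z : {x : Fin n → ℝ | x ∈ stdCone n ∧ ‖x‖ ≤ 1} => F m z.1) := by
      intro m
      exact ((hlipA (F m) (hFA m)).mono (fun z hz => hz.1)).restrict
    set u : ℕ → C({x : Fin n → ℝ | x ∈ stdCone n ∧ ‖x‖ ≤ 1}, Fin n → ℝ) :=
      fun m => ⟨fun z => F m z.1, hFcont m⟩ with hudef
    have humem : ∀ m, u m ∈ {g : C({x : Fin n → ℝ | x ∈ stdCone n ∧ ‖x‖ ≤ 1}, Fin n → ℝ) |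
        ∃ f ∈ A, ∀ z, g z = f z.1} :=
      fun m => ⟨F m, hFA m, fun z => rfl⟩
    obtain ⟨g₀, hg₀S, ψ, hψ, hconv⟩ := hcomp.tendsto_subseq humem
    obtain ⟨g, hgA, hg₀⟩ := hg₀S
    refine ⟨g, hgA, ?_⟩
    have hgxK : g x ∈ stdCone n := (hA g hgA).1.1 hxK
    apply le_antisymm (hextφ g hgA x hxK)
    refine le_ciInf fun m => ?_
    have hptconv : Tendsto (fun j => F (ψ j) x) atTop (𝓝 (g x)) := by
      have h2 : Tendsto (fun j => (u (ψ j)) ⟨x, hxK, hx1⟩) atTop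
          (𝓝 (g₀ ⟨x, hxK, hx1⟩)) :=
        ((continuous_eval_const
          (⟨x, hxK, hx1⟩ : {x : Fin n → ℝ | x ∈ stdCone n ∧ ‖x‖ ≤ 1})).tendsto g₀).comp hconv
      rw [hg₀ ⟨x, hxK, hx1⟩] at h2
      exact h2
    have hlim1 : Tendsto (fun j => aSeq A νs m (F (ψ j) x)) atTop
        (𝓝 (aSeq A νs m (g x))) :=
      ((ham_cont m).tendsto (g x)).comp hptconv
    have hlim2 : Tendsto (fun j : ℕ => nuStarStar A νs x - 1/(j+1)) atTop
        (𝓝 (nuStarStar A νs x)) := by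
      have h5 := tendsto_one_div_add_atTop_nhds_zero_nat (𝕜 := ℝ)
      have h6 := Tendsto.sub (tendsto_const_nhds :
        Tendsto (fun _ : ℕ => nuStarStar A νs x) atTop (𝓝 (nuStarStar A νs x))) h5
      simpa using h6
    refine le_of_tendsto_of_tendsto hlim2 hlim1 ?_
    filter_upwards [eventually_ge_atTop m] with j hj
    have hψj : m ≤ ψ j := le_trans hj hψ.le_apply
    have step1 : nuStarStar A νs x - 1/(ψ j + 1) ≤ aSeq A νs (ψ j) (F (ψ j) x) := hFb (ψ j)
    have step2 : aSeq A νs (ψ j) (F (ψ j) x) ≤ aSeq A νs m (F (ψ j) x) := hanti _ hψj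
    have step3 : (1:ℝ)/(ψ j + 1) ≤ 1/(j + 1) := by
      apply one_div_le_one_div_of_le (by positivity)
      have h7 : (j:ℝ) ≤ ψ j := by exact_mod_cast hψ.le_apply
      linarith
    linarith
  have hbar : ∀ x ∈ stdCone n, ∃ g ∈ A, nuStarStar A νs (g x) = nuStarStar A νs x := by
    intro x hxK
    rcases le_or_gt ‖x‖ 1 with hx1 | hx1
    · exact hbar1 x hxK hx1
    · have hnx : 0 < ‖x‖ := by linarith
      have hwK : ‖x‖⁻¹ • x ∈ stdCone n := by
        intro i
        have h5 := hxK i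
        have h6 : (0:ℝ) ≤ ‖x‖⁻¹ := inv_nonneg.mpr hnx.le
        simpa [Pi.smul_apply, smul_eq_mul] using mul_nonneg h6 h5
      have hw1 : ‖‖x‖⁻¹ • x‖ ≤ 1 := by
        rw [norm_smul, norm_inv, norm_norm, inv_mul_cancel₀ hnx.ne']
      obtain ⟨g, hgA, hgw⟩ := hbar1 (‖x‖⁻¹ • x) hwK hw1
      refine ⟨g, hgA, ?_⟩
      have hxw : ‖x‖ • (‖x‖⁻¹ • x) = x := by
        rw [smul_smul, mul_inv_cancel₀ hnx.ne', one_smul]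
      have h2 : g x = ‖x‖ • g (‖x‖⁻¹ • x) := by
        conv_lhs => rw [← hxw]
        exact (hA g hgA).1.2 ‖x‖ hnx _ hwK
      rw [h2, hhom, hgw, ← hhom, hxw]
  exact ⟨h1, hsub, hhom, hpos, hφ_nonneg, hextφ, hbar⟩
end
end
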